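/- Let R be an algebra over a commutative domain S and σ an S-algebra endomorphism of R. Then R is strongly σ-symmetric if and only if the Dorroh extension D = R ⊕ S, with multiplication (r₁,s₁)(r₂,s₂) = (r₁r₂ + s₁r₂ + s₂r₁, s₁s₂) and endomorphism σ̄(r,s) = (σ(r), s), is strongly σ̄-symmetric. -/

import Mathlib

/-- The coefficient of `x^n` in the product of two skew polynomials in `R[x;σ]`
(where `x·r = σ(r)·x`), given their coefficient functions. -/
def skewMul {R : Type*} [Ring R] (σ : R →+* R) (p q : ℕ → R) : ℕ → R :=
  fun n => ∑ i ∈ Finset.range (n + 1), p i * (⇑σ)^[i] (q (n - i))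

/-- A ring is symmetric if `abc = 0` implies `acb = 0`. -/
def SymmetricRing (R : Type*) [Ring R] : Prop :=
  ∀ a b c : R, a * b * c = 0 → a * c * b = 0

/-- `R` is strongly `σ`-symmetric if the skew polynomial ring `R[x;σ]` is symmetric,
expressed via the coefficientwise skew convolution. -/
def StronglySkewSymmetric (R : Type*) [Ring R] (σ : R →+* R) : Prop :=
  ∀ p q r : Polynomial R,
    skewMul σ (skewMul σ p.coeff q.coeff) r.coeff = 0 →
    skewMul σ (skewMul σ p.coeff r.coeff) q.coeff = 0

/-- The extension `σ̄(r, s) = (σ r, s)` of an `S`-algebra endomorphism `σ` of `R` to the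
Dorroh extension (unitization) `D = R ⊕ S`. -/
noncomputable def dorrohMap {S R : Type*} [CommRing S] [Ring R] [Algebra S R]
    (σ : R →ₐ[S] R) : Unitization S R →+* Unitization S R :=
  (Unitization.lift ((Unitization.inrNonUnitalAlgHom S R).comp σ.toNonUnitalAlgHom)).toRingHom

/-! ### Auxiliary lemmas -/

theorem iterate_comm' {R R' : Type*} (σ : R → R) (σ' : R' → R') (f : R → R')
    (h : ∀ r, f (σ r) = σ' (f r)) (i : ℕ) (r : R) : f (σ^[i] r) = σ'^[i] (f r) := by
  induction i generalizing r with
  | zero => rfl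
  | succ n ih =>
    rw [Function.iterate_succ_apply, Function.iterate_succ_apply, ih, h]

theorem skewMul_nahom {R R' : Type*} [Ring R] [Ring R'] (σ : R →+* R) (σ' : R' →+* R')
    {F : Type*} [FunLike F R R'] [NonUnitalRingHomClass F R R'] (f : F)
    (h : ∀ r, f (σ r) = σ' (f r)) (p q : ℕ → R) (n : ℕ) :
    f (skewMul σ p q n) = skewMul σ' (fun i => f (p i)) (fun i => f (q i)) n := by
  simp only [skewMul, map_sum, map_mul, iterate_comm' (⇑σ) (⇑σ') (⇑f) h]

/-- Map a polynomial coefficientwise by a zero-preserving function. -/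
noncomputable def mapPoly {R R' : Type*} [Semiring R] [Semiring R'] (f : R → R') (hf : f 0 = 0)
    (p : Polynomial R) : Polynomial R' :=
  ⟨AddMonoidAlgebra.ofCoeff (p.toFinsupp.coeff.mapRange f hf)⟩

@[simp] theorem coeff_mapPoly {R R' : Type*} [Semiring R] [Semiring R'] (f : R → R')
    (hf : f 0 = 0) (p : Polynomial R) (n : ℕ) :
    (mapPoly f hf p).coeff n = f (p.coeff n) := by
  simp [mapPoly, Polynomial.coeff, AddMonoidAlgebra.coeff_ofCoeff]

/-- Strong skew-symmetry transfers along ring isomorphisms intertwining the endomorphisms. -/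
theorem sss_of_equiv {R R' : Type*} [Ring R] [Ring R'] (σ : R →+* R) (σ' : R' →+* R')
    (e : R ≃+* R') (h : ∀ r, e (σ r) = σ' (e r))
    (hR : StronglySkewSymmetric R σ) : StronglySkewSymmetric R' σ' := by
  intro p q r hpqr
  have h' : ∀ x, e.symm (σ' x) = σ (e.symm x) := fun x => by
    apply e.injective
    rw [h, e.apply_symm_apply, e.apply_symm_apply]
  set p' := mapPoly (⇑e.symm) (map_zero _) p with hp'
  set q' := mapPoly (⇑e.symm) (map_zero _) q with hq'
  set r' := mapPoly (⇑e.symm) (map_zero _) r with hr'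
  have cp' : p'.coeff = fun i => e.symm (p.coeff i) := funext fun i => coeff_mapPoly _ _ _ _
  have cq' : q'.coeff = fun i => e.symm (q.coeff i) := funext fun i => coeff_mapPoly _ _ _ _
  have cr' : r'.coeff = fun i => e.symm (r.coeff i) := funext fun i => coeff_mapPoly _ _ _ _
  have key : ∀ u v : ℕ → R', skewMul σ (fun i => e.symm (u i)) (fun i => e.symm (v i))
      = fun n => e.symm (skewMul σ' u v n) := by
    intro u v
    funext n
    rw [skewMul_nahom σ' σ (e.symm : R' ≃+* R) h' u v n]
  have hyp : skewMul σ (skewMul σ p'.coeff q'.coeff) r'.coeff = 0 := by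
    rw [cp', cq', cr', key p.coeff q.coeff, key _ r.coeff]
    funext n
    rw [congrFun hpqr n]
    simp
  have hres := hR p' q' r' hyp
  rw [cp', cq', cr', key p.coeff r.coeff, key _ q.coeff] at hres
  funext n
  have := congrFun hres n
  exact e.symm.injective (by simpa using this)

theorem skewMul_id {S : Type*} [Ring S] (p q : Polynomial S) (n : ℕ) :
    skewMul (RingHom.id S) p.coeff q.coeff n = (p * q).coeff n := by
  rw [Polynomial.coeff_mul, Finset.Nat.sum_antidiagonal_eq_sum_range_succ_mk]
  have hi : ∀ (i : ℕ) (x : S), (⇑(RingHom.id S))^[i] x = x := fun i x =>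
    Function.iterate_fixed rfl i
  simp [skewMul, hi]

/-- The embedding `r ↦ (0, r)` as a non-unital ring hom. -/
def inrProd (S R : Type*) [Ring S] [Ring R] : R →ₙ+* S × R where
  toFun r := (0, r)
  map_mul' a b := by ext <;> simp
  map_zero' := rfl
  map_add' a b := by ext <;> simp

theorem sss_prod_iff {S R : Type*} [CommRing S] [Ring R] (σ : R →+* R) :
    StronglySkewSymmetric (S × R) ((RingHom.id S).prodMap σ) ↔ StronglySkewSymmetric R σ := by
  set τ : S × R →+* S × R := (RingHom.id S).prodMap σ with hτ
  have fst_skew : ∀ (U V : ℕ → S × R) (n : ℕ), (skewMul τ U V n).1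
      = skewMul (RingHom.id S) (fun i => (U i).1) (fun i => (V i).1) n := fun U V n =>
    skewMul_nahom τ (RingHom.id S) (RingHom.fst S R) (fun _ => rfl) U V n
  have snd_skew : ∀ (U V : ℕ → S × R) (n : ℕ), (skewMul τ U V n).2
      = skewMul σ (fun i => (U i).2) (fun i => (V i).2) n := fun U V n =>
    skewMul_nahom τ σ (RingHom.snd S R) (fun _ => rfl) U V n
  have inr_skew : ∀ (u v : ℕ → R) (n : ℕ),
      (((0 : S), skewMul σ u v n) : S × R)
        = skewMul τ (fun i => (0, u i)) (fun i => (0, v i)) n := fun u v n =>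
    skewMul_nahom σ τ (inrProd S R) (fun _ => rfl) u v n
  constructor
  · -- product strongly symmetric → R strongly symmetric
    intro hP p q r hpqr
    set P := mapPoly (fun x : R => ((0 : S), x)) rfl p with hPdef
    set Q := mapPoly (fun x : R => ((0 : S), x)) rfl q with hQdef
    set T := mapPoly (fun x : R => ((0 : S), x)) rfl r with hTdef
    have cP : P.coeff = fun i => (((0 : S), p.coeff i) : S × R) :=
      funext fun i => coeff_mapPoly _ _ _ _
    have cQ : Q.coeff = fun i => (((0 : S), q.coeff i) : S × R) :=
      funext fun i => coeff_mapPoly _ _ _ _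
    have cT : T.coeff = fun i => (((0 : S), r.coeff i) : S × R) :=
      funext fun i => coeff_mapPoly _ _ _ _
    have hyp : skewMul τ (skewMul τ P.coeff Q.coeff) T.coeff = 0 := by
      have inner : skewMul τ P.coeff Q.coeff
          = fun i => (((0 : S), skewMul σ p.coeff q.coeff i) : S × R) := by
        funext i
        rw [cP, cQ, ← inr_skew]
      funext n
      rw [inner, cT, ← inr_skew, congrFun hpqr n]
      simp
    have hres := hP P Q T hyp
    have inner' : skewMul τ P.coeff T.coeff
        = fun i => (((0 : S), skewMul σ p.coeff r.coeff i) : S × R) := by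
      funext i
      rw [cP, cT, ← inr_skew]
    rw [inner', cQ] at hres
    funext n
    have := congrFun hres n
    rw [← inr_skew] at this
    simpa using congrArg Prod.snd this
  · -- R strongly symmetric → product strongly symmetric
    intro hR P Q T hpqt
    set A := mapPoly (Prod.fst : S × R → S) rfl P with hA
    set B := mapPoly (Prod.fst : S × R → S) rfl Q with hB
    set C := mapPoly (Prod.fst : S × R → S) rfl T with hC
    set p := mapPoly (Prod.snd : S × R → R) rfl P with hp
    set q := mapPoly (Prod.snd : S × R → R) rfl Q with hq
    set t := mapPoly (Prod.snd : S × R → R) rfl T with ht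
    have cA : A.coeff = fun i => (P.coeff i).1 := funext fun i => coeff_mapPoly _ _ _ _
    have cB : B.coeff = fun i => (Q.coeff i).1 := funext fun i => coeff_mapPoly _ _ _ _
    have cC : C.coeff = fun i => (T.coeff i).1 := funext fun i => coeff_mapPoly _ _ _ _
    have cp : p.coeff = fun i => (P.coeff i).2 := funext fun i => coeff_mapPoly _ _ _ _
    have cq : q.coeff = fun i => (Q.coeff i).2 := funext fun i => coeff_mapPoly _ _ _ _
    have ct : t.coeff = fun i => (T.coeff i).2 := funext fun i => coeff_mapPoly _ _ _ _
    -- S-part of the hypothesis: (A * B) * C = 0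
    have hABC : A * B * C = 0 := by
      apply Polynomial.ext
      intro n
      have h1 := congrArg Prod.fst (congrFun hpqt n)
      rw [fst_skew] at h1
      have e1 : (fun i => (skewMul τ P.coeff Q.coeff i).1) = (A * B).coeff := by
        funext i
        rw [fst_skew, ← cA, ← cB, skewMul_id]
      rw [e1, ← cC, skewMul_id] at h1
      simpa using h1
    -- R-part of the hypothesis
    have hpqt' : skewMul σ (skewMul σ p.coeff q.coeff) t.coeff = 0 := by
      funext n
      have h1 := congrArg Prod.snd (congrFun hpqt n)
      rw [snd_skew] at h1
      have e1 : (fun i => (skewMul τ P.coeff Q.coeff i).2)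
          = skewMul σ p.coeff q.coeff := by
        funext i
        rw [snd_skew, ← cp, ← cq]
      rw [e1, ← ct] at h1
      simpa using h1
    have hres := hR p q t hpqt'
    funext n
    have gfst : (skewMul τ (skewMul τ P.coeff T.coeff) Q.coeff n).1 = 0 := by
      rw [fst_skew]
      have e1 : (fun i => (skewMul τ P.coeff T.coeff i).1) = (A * C).coeff := by
        funext i
        rw [fst_skew, ← cA, ← cC, skewMul_id]
      rw [e1, ← cB, skewMul_id]
      have : A * C * B = 0 := by rw [mul_right_comm]; exact hABC
      rw [this]
      simp
    have gsnd : (skewMul τ (skewMul τ P.coeff T.coeff) Q.coeff n).2 = 0 := by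
      rw [snd_skew]
      have e1 : (fun i => (skewMul τ P.coeff T.coeff i).2)
          = skewMul σ p.coeff t.coeff := by
        funext i
        rw [snd_skew, ← cp, ← ct]
      rw [e1, ← cq, congrFun hres n]
      rfl
    exact Prod.ext gfst gsnd

/-- The Dorroh extension of a unital algebra is isomorphic to the product ring. -/
noncomputable def unitizationEquivProd (S R : Type*) [CommRing S] [Ring R] [Algebra S R] :
    Unitization S R ≃+* S × R where
  toFun d := (d.fst, d.snd + algebraMap S R d.fst)
  invFun x := Unitization.inl x.1 + Unitization.inr (x.2 - algebraMap S R x.1)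
  left_inv d := by
    apply Unitization.ext
    · simp
    · simp
  right_inv x := by
    apply Prod.ext
    · show (Unitization.inl x.1 + Unitization.inr (x.2 - algebraMap S R x.1)).fst = x.1
      rw [Unitization.fst_add, Unitization.fst_inl, Unitization.fst_inr, add_zero]
    · show (Unitization.inl x.1 + Unitization.inr (x.2 - algebraMap S R x.1)).snd
        + algebraMap S R (Unitization.inl x.1 + Unitization.inr (x.2 - algebraMap S R x.1)).fst
        = x.2
      rw [Unitization.snd_add, Unitization.snd_inl, Unitization.snd_inr, zero_add,
        Unitization.fst_add, Unitization.fst_inl, Unitization.fst_inr, add_zero,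
        sub_add_cancel]
  map_mul' d e := by
    apply Prod.ext
    · simp [Unitization.fst_mul]
    · have h1 : d.snd * algebraMap S R e.fst = algebraMap S R e.fst * d.snd :=
        (Algebra.commutes _ _).symm
      show (d * e).snd + algebraMap S R (d * e).fst
        = (d.snd + algebraMap S R d.fst) * (e.snd + algebraMap S R e.fst)
      rw [Unitization.snd_mul, Unitization.fst_mul, map_mul, Algebra.smul_def, Algebra.smul_def]
      rw [mul_add, add_mul, add_mul, h1]
      abel
  map_add' d e := by
    apply Prod.ext
    · simp
    · show (d + e).snd + algebraMap S R (d + e).fst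
        = (d.snd + algebraMap S R d.fst) + (e.snd + algebraMap S R e.fst)
      rw [Unitization.snd_add, Unitization.fst_add, map_add]
      abel

theorem dorrohMap_fst {S R : Type*} [CommRing S] [Ring R] [Algebra S R] (σ : R →ₐ[S] R)
    (d : Unitization S R) : (dorrohMap σ d).fst = d.fst := by
  simp [dorrohMap, Unitization.algebraMap_eq_inl]

theorem dorrohMap_snd {S R : Type*} [CommRing S] [Ring R] [Algebra S R] (σ : R →ₐ[S] R)
    (d : Unitization S R) : (dorrohMap σ d).snd = σ d.snd := by
  simp only [dorrohMap, AlgHom.toRingHom_eq_coe, RingHom.coe_coe, Unitization.lift_apply, NonUnitalAlgHom.toAlgHom_apply,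
    NonUnitalAlgHom.comp_apply, Unitization.algebraMap_eq_inl, Unitization.snd_add,
    Unitization.snd_inl, zero_add]
  rfl

theorem unitizationEquivProd_dorroh {S R : Type*} [CommRing S] [Ring R] [Algebra S R]
    (σ : R →ₐ[S] R) (d : Unitization S R) :
    unitizationEquivProd S R (dorrohMap σ d)
      = ((RingHom.id S).prodMap σ.toRingHom) (unitizationEquivProd S R d) := by
  apply Prod.ext
  · simp [unitizationEquivProd, dorrohMap_fst]
  · simp [unitizationEquivProd, dorrohMap_fst, dorrohMap_snd, map_add, AlgHom.commutes]

theorem dorroh_stronglySkewSymmetric_iff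
    {S R : Type*} [CommRing S] [IsDomain S] [Ring R] [Algebra S R] (σ : R →ₐ[S] R) :
    StronglySkewSymmetric R σ.toRingHom ↔
      StronglySkewSymmetric (Unitization S R) (dorrohMap σ) := by
  constructor
  · intro hR
    refine sss_of_equiv ((RingHom.id S).prodMap σ.toRingHom) (dorrohMap σ)
      (unitizationEquivProd S R).symm (fun x => ?_)
      ((sss_prod_iff σ.toRingHom).mpr hR)
    apply (unitizationEquivProd S R).injective
    rw [RingEquiv.apply_symm_apply, unitizationEquivProd_dorroh, RingEquiv.apply_symm_apply]
  · intro hD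
    exact (sss_prod_iff σ.toRingHom).mp
      (sss_of_equiv (dorrohMap σ) ((RingHom.id S).prodMap σ.toRingHom)
        (unitizationEquivProd S R) (unitizationEquivProd_dorroh σ) hD)
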